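/- Let X be a Hilbert space, V a closed k-dimensional subspace with orthogonal projection π, Ω ⊆ V, and g : Ω → V^⊥ a Lipschitz function with Lip(g) ≤ ε ≤ 1. Then for all x, y ∈ Ω, | ‖(x + g(x)) − (y + g(y))‖² − ‖x − y‖² | ≤ 8 ρ_X(4ε) ‖x − y‖², where ρ_X(t) = √(1+t²) − 1. In particular π restricted to the graph of g is a bi-Lipschitz equivalence onto Ω with bi-Lipschitz constant at most 1 + 8ρ_X(4ε). -/

import Mathlib

open Metric

/-- Graphs over a subspace of a Hilbert space with small Lipschitz constant are
bi-Lipschitz equivalent to their base via the orthogonal projection, with a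
quadratic-type defect `8·ρ(4ε)` where `ρ(t) = √(1+t²) − 1`. -/
theorem hilbert_graph_bilipschitz {H : Type} [NormedAddCommGroup H]
    [InnerProductSpace ℝ H] [CompleteSpace H]
    (k : ℕ) (V : Submodule ℝ H) [FiniteDimensional ℝ V]
    (hV : Module.finrank ℝ V = k)
    (Ω : Set V) (g : V → H) (hg : ∀ x ∈ Ω, g x ∈ Vᗮ)
    (ε : ℝ) (hε0 : 0 ≤ ε) (hε1 : ε ≤ 1)
    (hLip : LipschitzOnWith (Real.toNNReal ε) g Ω) :
    ∀ x ∈ Ω, ∀ y ∈ Ω,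
      |‖((x : H) + g x) - ((y : H) + g y)‖ ^ 2 - ‖(x : H) - (y : H)‖ ^ 2| ≤
          8 * (Real.sqrt (1 + (4 * ε) ^ 2) - 1) * ‖(x : H) - (y : H)‖ ^ 2 ∧
      ‖((x : H) + g x) - ((y : H) + g y)‖ ≤
          (1 + 8 * (Real.sqrt (1 + (4 * ε) ^ 2) - 1)) * ‖(x : H) - (y : H)‖ ∧
      ‖(x : H) - (y : H)‖ ≤
          (1 + 8 * (Real.sqrt (1 + (4 * ε) ^ 2) - 1)) *
            ‖((x : H) + g x) - ((y : H) + g y)‖ := by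
  intro x hx y hy
  set ρ : ℝ := Real.sqrt (1 + (4 * ε) ^ 2) - 1 with hρdef
  have hsq : Real.sqrt (1 + (4 * ε) ^ 2) ^ 2 = 1 + (4 * ε) ^ 2 :=
    Real.sq_sqrt (by positivity)
  have hsqrt_ge : (1 : ℝ) ≤ Real.sqrt (1 + (4 * ε) ^ 2) := by
    nlinarith [Real.sqrt_nonneg (1 + (4 * ε) ^ 2), sq_nonneg (4 * ε)]
  have hρ0 : 0 ≤ ρ := by rw [hρdef]; linarith
  have hsqrt_le : Real.sqrt (1 + (4 * ε) ^ 2) ≤ 5 := by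
    rw [show (5:ℝ) = Real.sqrt 25 by
      rw [show (25:ℝ) = 5^2 by norm_num, Real.sqrt_sq]; norm_num]
    exact Real.sqrt_le_sqrt (by nlinarith)
  -- key scalar inequality: ε² ≤ 8ρ
  have hkey : ε ^ 2 ≤ 8 * ρ := by
    have : 16 * ε ^ 2 = (Real.sqrt (1 + (4*ε)^2) - 1) * (Real.sqrt (1 + (4*ε)^2) + 1) := by
      nlinarith
    nlinarith
  set u : H := (x : H) - (y : H) with hu
  set w : H := g x - g y with hw
  have humem : u ∈ V := by
    have := Submodule.sub_mem V x.2 y.2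
    simpa using this
  have hwmem : w ∈ Vᗮ := Submodule.sub_mem _ (hg x hx) (hg y hy)
  have hinner : inner ℝ u w = (0 : ℝ) :=
    Submodule.inner_right_of_mem_orthogonal humem hwmem
  have heq : ((x : H) + g x) - ((y : H) + g y) = u + w := by
    simp only [hu, hw]; abel
  have hpyth : ‖u + w‖ ^ 2 = ‖u‖ ^ 2 + ‖w‖ ^ 2 := by
    have := norm_add_sq_real u w
    simp only [hinner] at this
    linarith
  have hwle : ‖w‖ ≤ ε * ‖u‖ := by
    have := hLip.dist_le_mul x hx y hy
    have hd1 : dist (g x) (g y) = ‖w‖ := dist_eq_norm _ _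
    have hd2 : dist x y = ‖u‖ := by
      rw [Subtype.dist_eq, dist_eq_norm]
    rw [hd1, hd2, Real.coe_toNNReal ε hε0] at this
    exact this
  have hw2 : ‖w‖ ^ 2 ≤ ε ^ 2 * ‖u‖ ^ 2 := by
    have h1 : 0 ≤ ‖w‖ := norm_nonneg _
    nlinarith
  rw [heq]
  have hN0 : 0 ≤ ‖u‖ := norm_nonneg _
  have hN1 : 0 ≤ ‖u + w‖ := norm_nonneg _
  refine ⟨?_, ?_, ?_⟩
  · rw [hpyth, show ‖u‖ ^ 2 + ‖w‖ ^ 2 - ‖u‖ ^ 2 = ‖w‖ ^ 2 from by ring,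
      abs_of_nonneg (by positivity : (0:ℝ) ≤ ‖w‖ ^ 2)]
    nlinarith
  · have h2 : ‖u + w‖ ^ 2 ≤ ((1 + 8 * ρ) * ‖u‖) ^ 2 := by
      rw [hpyth]
      nlinarith [mul_nonneg hρ0 (sq_nonneg ‖u‖),
        mul_nonneg (mul_nonneg hρ0 hρ0) (sq_nonneg ‖u‖)]
    calc ‖u + w‖ = Real.sqrt (‖u + w‖ ^ 2) := by rw [Real.sqrt_sq hN1]
      _ ≤ Real.sqrt (((1 + 8 * ρ) * ‖u‖) ^ 2) := Real.sqrt_le_sqrt h2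
      _ = (1 + 8 * ρ) * ‖u‖ := Real.sqrt_sq (mul_nonneg (by linarith) hN0)
  · have h2 : ‖u‖ ≤ ‖u + w‖ := by
      have h3 : ‖u‖ ^ 2 ≤ ‖u + w‖ ^ 2 := by rw [hpyth]; nlinarith
      calc ‖u‖ = Real.sqrt (‖u‖ ^ 2) := by rw [Real.sqrt_sq hN0]
        _ ≤ Real.sqrt (‖u + w‖ ^ 2) := Real.sqrt_le_sqrt h3
        _ = ‖u + w‖ := Real.sqrt_sq hN1
    calc ‖u‖ ≤ ‖u + w‖ := h2
      _ = 1 * ‖u + w‖ := (one_mul _).symm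
      _ ≤ (1 + 8 * ρ) * ‖u + w‖ := mul_le_mul_of_nonneg_right (by linarith) hN1
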